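/- Let N be a positive integer. Let K and C be invertible N×N complex matrices, M an N×N complex matrix, and r, s column vectors in ℂ^N such that K·M·(conj K) + M = −r·s† (entrywise conjugate conj K, and s† the conjugate-transpose row vector). Assume C − M·(conj C)⁻¹·(conj M) is invertible. Then the scalar 1 − s†·(conj K)⁻¹·(conj C)⁻¹·(conj M)·(C − M·(conj C)⁻¹·(conj M))⁻¹·K⁻¹·r equals det(C + K⁻¹·M·(conj K)⁻¹·(conj C)⁻¹·(conj M)) / det(C − M·(conj C)⁻¹·(conj M)). -/

import Mathlib

open Matrix

theorem stmt_16 (N : ℕ) (hN : 0 < N)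
    (K C M : Matrix (Fin N) (Fin N) ℂ)
    (hK : IsUnit K.det) (hC : IsUnit C.det)
    (r s : Fin N → ℂ)
    (hSyl : K * M * (K.map (starRingEnd ℂ)) + M = -Matrix.vecMulVec r (star s))
    (hInv : IsUnit (C - M * (C.map (starRingEnd ℂ))⁻¹ * (M.map (starRingEnd ℂ))).det) :
    1 - dotProduct (star s)
        (Matrix.mulVec
          ((K.map (starRingEnd ℂ))⁻¹ * (C.map (starRingEnd ℂ))⁻¹ * (M.map (starRingEnd ℂ))
            * (C - M * (C.map (starRingEnd ℂ))⁻¹ * (M.map (starRingEnd ℂ)))⁻¹ * K⁻¹)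
          r)
      = (C + K⁻¹ * M * (K.map (starRingEnd ℂ))⁻¹ * (C.map (starRingEnd ℂ))⁻¹
            * (M.map (starRingEnd ℂ))).det
        / (C - M * (C.map (starRingEnd ℂ))⁻¹ * (M.map (starRingEnd ℂ))).det := by
  set Kb := K.map (starRingEnd ℂ) with hKb
  set Cb := C.map (starRingEnd ℂ) with hCb
  set Mb := M.map (starRingEnd ℂ) with hMb
  set A := C - M * Cb⁻¹ * Mb with hA
  set B := Kb⁻¹ * Cb⁻¹ * Mb * A⁻¹ * K⁻¹ with hB
  have hKbdet : IsUnit Kb.det := by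
    rw [hKb, ← RingHom.mapMatrix_apply, ← RingHom.map_det]
    exact hK.map (starRingEnd ℂ)
  -- step 1: scalar as determinant of rank-one update
  have h1 : 1 - dotProduct (star s) (B.mulVec r)
      = det (1 + B * (K * M * Kb + M)) := by
    rw [hSyl, Matrix.mul_neg, ← Matrix.neg_mul, Matrix.vecMulVec_eq (Fin 1),
      ← Matrix.mul_assoc, ← Matrix.replicateCol_mulVec, Matrix.det_one_add_replicateCol_mul_replicateRow]
    have : (-B) *ᵥ r = -(B *ᵥ r) := Matrix.neg_mulVec r B
    rw [this, dotProduct_neg, ← sub_eq_add_neg]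
  rw [h1]
  -- step 2: rewrite using Weinstein–Aronszajn
  have h2 : B * (K * M * Kb + M)
      = (Kb⁻¹ * Cb⁻¹ * Mb) * (A⁻¹ * (K⁻¹ * (K * M * Kb + M))) := by
    rw [hB]; rw [Matrix.mul_assoc, Matrix.mul_assoc, Matrix.mul_assoc]
  rw [h2, Matrix.det_one_add_mul_comm]
  have hKP : K⁻¹ * (K * M * Kb + M) * Kb⁻¹ = M + K⁻¹ * M * Kb⁻¹ := by
    rw [Matrix.mul_add, ← Matrix.mul_assoc, ← Matrix.mul_assoc,
      Matrix.nonsing_inv_mul _ hK, Matrix.one_mul, Matrix.add_mul,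
      Matrix.mul_assoc M Kb Kb⁻¹, Matrix.mul_nonsing_inv _ hKbdet, Matrix.mul_one]
  have h3 : A⁻¹ * (K⁻¹ * (K * M * Kb + M)) * (Kb⁻¹ * Cb⁻¹ * Mb)
      = A⁻¹ * ((M + K⁻¹ * M * Kb⁻¹) * (Cb⁻¹ * Mb)) := by
    rw [← hKP]; noncomm_ring
  rw [h3]
  have h4 : 1 + A⁻¹ * ((M + K⁻¹ * M * Kb⁻¹) * (Cb⁻¹ * Mb))
      = A⁻¹ * (C + K⁻¹ * M * Kb⁻¹ * Cb⁻¹ * Mb) := by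
    rw [Matrix.mul_add]
    have : (A⁻¹ : Matrix (Fin N) (Fin N) ℂ) * C = A⁻¹ * A + A⁻¹ * (M * Cb⁻¹ * Mb) := by
      rw [← Matrix.mul_add, hA, sub_add_cancel]
    rw [this, Matrix.nonsing_inv_mul _ hInv]
    noncomm_ring
  rw [h4, Matrix.det_mul, Matrix.det_nonsing_inv, Ring.inverse_eq_inv']
  field_simp
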